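/- Let X₁,…,X_r be i.i.d. Bin(n,p), 0 < p < 1, Z = min_i X_i, δ ∈ (0,1), and Δ = log₂(2/δ) + 4 log₂(n+1) + max(0, log₂(p/(1-p))). If KL(0‖p) < (log₂ r - Δ)/n, then P(Z = 0) ≥ 1 - δ/2. -/

import Mathlib

open MeasureTheory ProbabilityTheory

/-- Binary KL divergence in bits: KL(a‖p) (conventions 0·log 0 = 0 hold since Real.log 0 = 0). -/
noncomputable def klB (a p : ℝ) : ℝ :=
  a * Real.logb 2 (a / p) + (1 - a) * Real.logb 2 ((1 - a) / (1 - p))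

/-- P(Bin(n,p) = k). -/
noncomputable def binPMF (n k : ℕ) (p : ℝ) : ℝ :=
  (n.choose k : ℝ) * p ^ k * (1 - p) ^ (n - k)

/-- Degenerate regime: the minimum of i.i.d. binomials is 0 with high probability. -/
theorem min_binomial_degenerate (r n : ℕ) (p δ Δ : ℝ) (hr : 0 < r)
    (hp : 0 < p) (hp1 : p < 1) (hδ0 : 0 < δ) (hδ1 : δ < 1)
    (hΔ : Δ = Real.logb 2 (2 / δ) + 4 * Real.logb 2 ((n : ℝ) + 1)
            + max 0 (Real.logb 2 (p / (1 - p))))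
    (hkl0 : klB 0 p < (Real.logb 2 r - Δ) / n)
    (Ω : Type*) [MeasurableSpace Ω] (μ : Measure Ω) [IsProbabilityMeasure μ]
    (X : Fin r → Ω → ℕ) (hXm : ∀ i, Measurable (X i))
    (hindep : iIndepFun X μ)
    (hmarg : ∀ i k, μ {ω | X i ω = k} = ENNReal.ofReal (binPMF n k p))
    (Z : Ω → ℕ)
    (hZ : ∀ ω, Z ω = Finset.univ.inf'
      (Finset.univ_nonempty_iff.mpr (Fin.pos_iff_nonempty.mp hr)) (fun i => X i ω)) :
    1 - δ / 2 ≤ (μ {ω | Z ω = 0}).toReal := by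
  have h1p : (0:ℝ) < 1 - p := by linarith
  set q : ℝ := (1 - p) ^ n with hq
  have hq0 : 0 < q := pow_pos h1p n
  have hq1 : q ≤ 1 := pow_le_one₀ h1p.le (by linarith)
  -- klB 0 p = - logb 2 (1 - p)
  have hklB : klB 0 p = - Real.logb 2 (1 - p) := by
    simp [klB, Real.logb, Real.log_div, h1p.ne', Real.log_zero]
    ring
  -- n ≠ 0
  have hn : 0 < n := by
    by_contra hn0
    have hn0 : n = 0 := Nat.eq_zero_of_not_pos hn0
    rw [hklB, hn0] at hkl0
    simp at hkl0
    have : Real.logb 2 (1 - p) < 0 := Real.logb_neg one_lt_two h1p (by linarith)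
    linarith
  -- from hkl0 : 2/δ < r * q
  have hlogq : Real.logb 2 q = n * Real.logb 2 (1 - p) := by
    rw [hq, Real.logb_pow]
  have hΔlt : Δ < Real.logb 2 ((r : ℝ) * q) := by
    have hnpos : (0:ℝ) < n := Nat.cast_pos.mpr hn
    have h2 : (klB 0 p) * n < Real.logb 2 r - Δ := by
      have := (lt_div_iff₀ hnpos).mp hkl0
      linarith
    rw [hklB] at h2
    rw [Real.logb_mul (by positivity) hq0.ne', hlogq]
    nlinarith
  have hΔge : Real.logb 2 (2 / δ) ≤ Δ := by
    have h1 : 0 ≤ Real.logb 2 ((n : ℝ) + 1) :=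
      Real.logb_nonneg one_lt_two (by linarith [Nat.cast_nonneg (α:=ℝ) n])
    have h2 : (0:ℝ) ≤ max 0 (Real.logb 2 (p / (1 - p))) := le_max_left _ _
    rw [hΔ]; linarith
  have hrq : 2 / δ < (r : ℝ) * q := by
    have h := lt_of_le_of_lt hΔge hΔlt
    have h2δ : (0:ℝ) < 2 / δ := by positivity
    exact (Real.logb_lt_logb_iff one_lt_two h2δ (by positivity)).mp h
  -- probability computation
  have hiff : ∀ ω, Z ω = 0 ↔ ∃ i, X i ω = 0 := by
    intro ω
    rw [hZ ω]
    constructor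
    · intro h
      obtain ⟨i, _, hi⟩ := Finset.exists_mem_eq_inf' _ (fun i => X i ω)
      exact ⟨i, by rw [← hi, h]⟩
    · rintro ⟨i, hi⟩
      exact Nat.le_zero.mp (le_of_le_of_eq (Finset.inf'_le _ (Finset.mem_univ i)) hi)
  have hcompl : {ω | Z ω = 0}ᶜ = ⋂ i, (X i) ⁻¹' ({0}ᶜ) := by
    ext ω
    simp [hiff ω]
  have hmeasA : MeasurableSet {ω | Z ω = 0} := by
    have : {ω | Z ω = 0} = ⋃ i, (X i) ⁻¹' {0} := by
      ext ω; simp [hiff ω]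
    rw [this]
    exact MeasurableSet.iUnion fun i => (hXm i) (measurableSet_singleton 0)
  have hXzero : ∀ i : Fin r, μ ((X i) ⁻¹' {0}) = ENNReal.ofReal q := by
    intro i
    have := hmarg i 0
    simpa [binPMF, Set.preimage, hq] using this
  have hXne : ∀ i : Fin r, μ ((X i) ⁻¹' ({0}ᶜ)) = ENNReal.ofReal (1 - q) := by
    intro i
    have hms : MeasurableSet ((X i) ⁻¹' {0}) := (hXm i) (measurableSet_singleton 0)
    have : μ ((X i) ⁻¹' ({0}ᶜ)) = 1 - μ ((X i) ⁻¹' {0}) := by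
      rw [Set.preimage_compl, measure_compl hms (measure_ne_top μ _), measure_univ]
    rw [this, hXzero i, ← ENNReal.ofReal_one, ← ENNReal.ofReal_sub _ hq0.le]
  have hprod : μ ({ω | Z ω = 0}ᶜ) = ENNReal.ofReal ((1 - q) ^ r) := by
    rw [hcompl, hindep.meas_iInter (fun i => ⟨{0}ᶜ,
      (measurableSet_singleton 0).compl, rfl⟩)]
    simp only [hXne]
    rw [Finset.prod_const, ← ENNReal.ofReal_pow (by linarith)]
    simp
  have hbound : (1 - q) ^ r ≤ δ / 2 := by
    have h1 : (1 - q) ^ r ≤ Real.exp (-q) ^ r := by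
      apply pow_le_pow_left₀ (by linarith)
      linarith [Real.add_one_le_exp (-q)]
    have h2 : Real.exp (-q) ^ r = Real.exp (-((r:ℝ) * q)) := by
      rw [← Real.exp_nat_mul]; ring_nf
    have h3 : Real.exp (-((r:ℝ) * q)) ≤ Real.exp (-(2/δ)) :=
      Real.exp_le_exp.mpr (by linarith)
    have h4 : Real.exp (-(2/δ)) ≤ δ / 2 := by
      rw [Real.exp_neg]
      have hge : 2 / δ ≤ Real.exp (2 / δ) := by
        linarith [Real.add_one_le_exp (2/δ)]
      have h2δ : (0:ℝ) < 2 / δ := by positivity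
      calc (Real.exp (2/δ))⁻¹ ≤ (2/δ)⁻¹ := by
            apply inv_anti₀ h2δ hge
        _ = δ / 2 := by field_simp
    calc (1 - q) ^ r ≤ Real.exp (-q) ^ r := h1
      _ = Real.exp (-((r:ℝ)*q)) := h2
      _ ≤ Real.exp (-(2/δ)) := h3
      _ ≤ δ / 2 := h4
  have hmain : μ {ω | Z ω = 0} = 1 - ENNReal.ofReal ((1 - q) ^ r) := by
    have hc : μ ({ω | Z ω = 0}ᶜ) = 1 - μ {ω | Z ω = 0} := by
      rw [measure_compl hmeasA (measure_ne_top μ _), measure_univ]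
    rw [← hprod, hc, ENNReal.sub_sub_cancel ENNReal.one_ne_top prob_le_one]
  rw [hmain]
  have hle1 : ENNReal.ofReal ((1 - q) ^ r) ≤ 1 := by
    rw [← ENNReal.ofReal_one]
    exact ENNReal.ofReal_le_ofReal (le_trans hbound (by linarith))
  rw [ENNReal.toReal_sub_of_le hle1 ENNReal.one_ne_top]
  simp only [ENNReal.toReal_one]
  rw [ENNReal.toReal_ofReal (pow_nonneg (by linarith) r)]
  linarith
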